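/- arXiv:2303.05316 — 6 statements merged into one kernel-verified Lean document; each statement's English description precedes it below -/
import Mathlib

section
/- The topological stable rank of A(p) equals 1; that is, the set of invertible elements of A(p) is dense in A(p): for every f ∈ A(p) and every δ > 0 there exists g ∈ A(p) which is invertible with respect to the multiplication ∗ and satisfies ‖g − f‖ < δ. -/
open scoped BigOperators

/-- A weight: a sequence of positive reals. -/
structure GoodWeight : Type where
  p : ℕ → ℝ
  pos : ∀ n, 0 < p n

namespace GoodWeight

/-- The growth condition `lim_{n→∞} p(n)^(1/n) = ∞`. -/
def Grows (w : GoodWeight) : Prop :=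
  Filter.Tendsto (fun n : ℕ => w.p n ^ ((n : ℝ)⁻¹)) Filter.atTop Filter.atTop

/-- The Banach algebra `A(p)`, in its sequence model: a sequence `a : ℕ → ℂ` (the
Taylor coefficients at `0` of the corresponding entire function) such that
`sup_n p(n)|a(n)| < ∞`. -/
def Ap (w : GoodWeight) : Type :=
  {a : ℕ → ℂ // ∃ C : ℝ, ∀ n, w.p n * ‖a n‖ ≤ C}

namespace Ap

variable {w : GoodWeight}

instance : Zero w.Ap :=
  ⟨⟨fun _ => 0, 0, fun n => by simp⟩⟩

instance : Add w.Ap :=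
  ⟨fun a b =>
    ⟨fun n => a.1 n + b.1 n, by
      obtain ⟨C, hC⟩ := a.2
      obtain ⟨D, hD⟩ := b.2
      refine ⟨C + D, fun n => ?_⟩
      have h1 : ‖a.1 n + b.1 n‖ ≤ ‖a.1 n‖ + ‖b.1 n‖ :=
        norm_add_le _ _
      calc w.p n * ‖a.1 n + b.1 n‖
          ≤ w.p n * ‖a.1 n‖ + w.p n * ‖b.1 n‖ := by
            rw [← mul_add]; exact mul_le_mul_of_nonneg_left h1 (w.pos n).le
        _ ≤ C + D := add_le_add (hC n) (hD n)⟩⟩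

instance : Neg w.Ap :=
  ⟨fun a =>
    ⟨fun n => -a.1 n, by
      obtain ⟨C, hC⟩ := a.2
      exact ⟨C, fun n => by simpa using hC n⟩⟩⟩

/-- The weighted Hadamard multiplication `(f ∗ g)(n) = p(n) f̂(n) ĝ(n)`. -/
instance : Mul w.Ap :=
  ⟨fun a b =>
    ⟨fun n => (w.p n : ℂ) * a.1 n * b.1 n, by
      obtain ⟨C, hC⟩ := a.2
      obtain ⟨D, hD⟩ := b.2
      refine ⟨C * D, fun n => ?_⟩
      have e : w.p n * ‖(w.p n : ℂ) * a.1 n * b.1 n‖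
          = (w.p n * ‖a.1 n‖) * (w.p n * ‖b.1 n‖) := by
        rw [norm_mul, norm_mul, Complex.norm_real, Real.norm_eq_abs, abs_of_pos (w.pos n)]; ring
      rw [e]
      have h0C : (0:ℝ) ≤ C :=
        le_trans (mul_nonneg (w.pos 0).le (norm_nonneg _)) (hC 0)
      exact mul_le_mul (hC n) (hD n) (mul_nonneg (w.pos n).le (norm_nonneg _)) h0C⟩⟩

/-- The identity element `ε`, with coefficients `1/p(n)`. -/
noncomputable instance : One w.Ap :=
  ⟨⟨fun n => ((w.p n : ℂ))⁻¹, 1, fun n => by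
      rw [norm_inv, Complex.norm_real, Real.norm_eq_abs, abs_of_pos (w.pos n),
        mul_inv_cancel₀ (w.pos n).ne']⟩⟩

instance : SMul ℂ w.Ap :=
  ⟨fun c a =>
    ⟨fun n => c * a.1 n, by
      obtain ⟨C, hC⟩ := a.2
      refine ⟨‖c‖ * C, fun n => ?_⟩
      rw [norm_mul]
      calc w.p n * (‖c‖ * ‖a.1 n‖)
          = ‖c‖ * (w.p n * ‖a.1 n‖) := by ring
        _ ≤ ‖c‖ * C := mul_le_mul_of_nonneg_left (hC n) (norm_nonneg c)⟩⟩

noncomputable instance : CommRing w.Ap where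
  add := (· + ·)
  add_assoc a b c := Subtype.ext (funext fun n => add_assoc _ _ _)
  zero := 0
  zero_add a := Subtype.ext (funext fun n => zero_add _)
  add_zero a := Subtype.ext (funext fun n => add_zero _)
  add_comm a b := Subtype.ext (funext fun n => add_comm _ _)
  nsmul := nsmulRec
  zsmul := zsmulRec
  mul := (· * ·)
  mul_assoc a b c := Subtype.ext (funext fun n => by
    show (w.p n : ℂ) * ((w.p n : ℂ) * a.1 n * b.1 n) * c.1 n
        = (w.p n : ℂ) * a.1 n * ((w.p n : ℂ) * b.1 n * c.1 n)
    ring)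
  one := 1
  one_mul a := Subtype.ext (funext fun n => by
    show (w.p n : ℂ) * ((w.p n : ℂ))⁻¹ * a.1 n = a.1 n
    have h : ((w.p n : ℝ) : ℂ) ≠ 0 := by exact_mod_cast (w.pos n).ne'
    rw [mul_inv_cancel₀ h, one_mul])
  mul_one a := Subtype.ext (funext fun n => by
    show (w.p n : ℂ) * a.1 n * ((w.p n : ℂ))⁻¹ = a.1 n
    have h : ((w.p n : ℝ) : ℂ) ≠ 0 := by exact_mod_cast (w.pos n).ne'
    field_simp)
  left_distrib a b c := Subtype.ext (funext fun n => by
    show (w.p n : ℂ) * a.1 n * (b.1 n + c.1 n)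
        = (w.p n : ℂ) * a.1 n * b.1 n + (w.p n : ℂ) * a.1 n * c.1 n
    ring)
  right_distrib a b c := Subtype.ext (funext fun n => by
    show (w.p n : ℂ) * (a.1 n + b.1 n) * c.1 n
        = (w.p n : ℂ) * a.1 n * c.1 n + (w.p n : ℂ) * b.1 n * c.1 n
    ring)
  zero_mul a := Subtype.ext (funext fun n => by
    show (w.p n : ℂ) * 0 * a.1 n = 0
    ring)
  mul_zero a := Subtype.ext (funext fun n => by
    show (w.p n : ℂ) * a.1 n * 0 = 0
    ring)
  mul_comm a b := Subtype.ext (funext fun n => by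
    show (w.p n : ℂ) * a.1 n * b.1 n = (w.p n : ℂ) * b.1 n * a.1 n
    ring)
  neg := Neg.neg
  neg_add_cancel a := Subtype.ext (funext fun n => neg_add_cancel _)

instance : Module ℂ w.Ap where
  smul := (· • ·)
  one_smul a := Subtype.ext (funext fun n => by
    show (1 : ℂ) * a.1 n = a.1 n
    ring)
  mul_smul c d a := Subtype.ext (funext fun n => by
    show (c * d) * a.1 n = c * (d * a.1 n)
    ring)
  smul_zero c := Subtype.ext (funext fun n => by
    show c * 0 = 0
    ring)
  smul_add c a b := Subtype.ext (funext fun n => by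
    show c * (a.1 n + b.1 n) = c * a.1 n + c * b.1 n
    ring)
  add_smul c d a := Subtype.ext (funext fun n => by
    show (c + d) * a.1 n = c * a.1 n + d * a.1 n
    ring)
  zero_smul a := Subtype.ext (funext fun n => by
    show (0 : ℂ) * a.1 n = 0
    ring)

noncomputable instance : Algebra ℂ w.Ap :=
  Algebra.ofModule
    (fun c a b => Subtype.ext (funext fun n => by
      show (w.p n : ℂ) * (c * a.1 n) * b.1 n = c * ((w.p n : ℂ) * a.1 n * b.1 n)
      ring))
    (fun c a b => Subtype.ext (funext fun n => by
      show (w.p n : ℂ) * a.1 n * (c * b.1 n) = c * ((w.p n : ℂ) * a.1 n * b.1 n)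
      ring))

theorem bddAbove (a : w.Ap) :
    BddAbove (Set.range fun n => w.p n * ‖a.1 n‖) := by
  obtain ⟨C, hC⟩ := a.2
  exact ⟨C, by rintro x ⟨k, rfl⟩; exact hC k⟩

/-- The norm `‖f‖ = sup_n p(n) |f̂(n)|`, as an `AddGroupNorm`. -/
noncomputable def gnorm (w : GoodWeight) : AddGroupNorm w.Ap where
  toFun a := ⨆ n, w.p n * ‖a.1 n‖
  map_zero' := by
    have h : ∀ n : ℕ, w.p n * ‖(0 : w.Ap).1 n‖ = 0 := fun n => by
      show w.p n * ‖0‖ = 0; simp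
    simp [h]
  add_le' a b := by
    apply ciSup_le
    intro n
    have h1 : ‖a.1 n + b.1 n‖ ≤ ‖a.1 n‖ + ‖b.1 n‖ :=
      norm_add_le _ _
    calc w.p n * ‖(a + b).1 n‖
        ≤ w.p n * ‖a.1 n‖ + w.p n * ‖b.1 n‖ := by
          rw [← mul_add]; exact mul_le_mul_of_nonneg_left h1 (w.pos n).le
      _ ≤ (⨆ k, w.p k * ‖a.1 k‖) + ⨆ k, w.p k * ‖b.1 k‖ :=
          add_le_add (le_ciSup (bddAbove a) n) (le_ciSup (bddAbove b) n)
  neg' a := by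
    have h : (fun n => w.p n * ‖(-a).1 n‖)
        = fun n => w.p n * ‖a.1 n‖ := by
      funext n
      show w.p n * ‖-a.1 n‖ = w.p n * ‖a.1 n‖
      rw [norm_neg]
    show (⨆ n, w.p n * ‖(-a).1 n‖) = ⨆ n, w.p n * ‖a.1 n‖
    rw [h]
  eq_zero_of_map_eq_zero' a h := by
    apply Subtype.ext
    funext n
    have h1 : w.p n * ‖a.1 n‖ ≤ 0 := h ▸ le_ciSup (bddAbove a) n
    have h2 : (0:ℝ) ≤ w.p n * ‖a.1 n‖ :=
      mul_nonneg (w.pos n).le (norm_nonneg _)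
    have h3 : ‖a.1 n‖ = 0 := by
      rcases mul_eq_zero.mp (le_antisymm h1 h2) with h' | h'
      · exact absurd h' (w.pos n).ne'
      · exact h'
    exact norm_eq_zero.mp h3

noncomputable instance : NormedAddCommGroup w.Ap :=
  (gnorm w).toNormedAddCommGroup

theorem norm_def (a : w.Ap) : ‖a‖ = ⨆ n, w.p n * ‖a.1 n‖ := rfl

theorem le_norm (a : w.Ap) (n : ℕ) : w.p n * ‖a.1 n‖ ≤ ‖a‖ :=
  le_ciSup (bddAbove a) n

theorem norm_nonneg' (a : w.Ap) : 0 ≤ ‖a‖ :=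
  le_trans (mul_nonneg (w.pos 0).le (norm_nonneg _)) (le_norm a 0)

noncomputable instance : NormedCommRing w.Ap :=
  { (inferInstance : NormedAddCommGroup w.Ap), (inferInstance : CommRing w.Ap) with
    norm_mul_le := by
      intro a b
      apply ciSup_le
      intro n
      have e : w.p n * ‖(a * b).1 n‖
          = (w.p n * ‖a.1 n‖) * (w.p n * ‖b.1 n‖) := by
        show w.p n * ‖(w.p n : ℂ) * a.1 n * b.1 n‖ = _
        rw [norm_mul, norm_mul, Complex.norm_real, Real.norm_eq_abs, abs_of_pos (w.pos n)]; ring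
      rw [e]
      exact mul_le_mul (le_norm a n) (le_norm b n)
        (mul_nonneg (w.pos n).le (norm_nonneg _)) (norm_nonneg' a) }

noncomputable instance : NormedSpace ℂ w.Ap where
  norm_smul_le c a := by
    apply ciSup_le
    intro n
    have e : w.p n * ‖(c • a).1 n‖
        = ‖c‖ * (w.p n * ‖a.1 n‖) := by
      show w.p n * ‖c * a.1 n‖ = _
      rw [norm_mul]; ring
    rw [e]
    calc ‖c‖ * (w.p n * ‖a.1 n‖)
        ≤ ‖c‖ * ‖a‖ := mul_le_mul_of_nonneg_left (le_norm a n) (norm_nonneg c)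
      _ = ‖c‖ * ‖a‖ := rfl

noncomputable instance : NormedAlgebra ℂ w.Ap :=
  { (inferInstance : Algebra ℂ w.Ap) with
    norm_smul_le := fun c a => norm_smul_le c a }

end Ap

end GoodWeight


/-- The topological stable rank of `A(p)` is `1`: the invertible elements
are dense in `A(p)`. -/
theorem topologicalStableRankOne (w : GoodWeight) (hg : w.Grows)
    (f : w.Ap) (δ : ℝ) (hδ : 0 < δ) :
    ∃ g : w.Ap, IsUnit g ∧ ‖g - f‖ < δ := by
  obtain ⟨C, hC⟩ := f.2
  set gfun : ℕ → ℂ := fun n =>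
    if w.p n * ‖f.1 n‖ < δ/3 then (((δ/3) / w.p n : ℝ) : ℂ) else f.1 n with hgfun
  have hlb : ∀ n, δ/3 ≤ w.p n * ‖gfun n‖ := by
    intro n
    by_cases h : w.p n * ‖f.1 n‖ < δ/3
    · simp only [hgfun, h, if_true]
      rw [Complex.norm_real, Real.norm_eq_abs, abs_of_nonneg (div_nonneg (by linarith) (w.pos n).le)]
      rw [mul_div_cancel₀ _ (w.pos n).ne']
    · simp only [hgfun, h, if_false]; exact not_lt.mp h
  have hub : ∀ n, w.p n * ‖gfun n‖ ≤ max (δ/3) C := by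
    intro n
    by_cases h : w.p n * ‖f.1 n‖ < δ/3
    · simp only [hgfun, h, if_true]
      rw [Complex.norm_real, Real.norm_eq_abs, abs_of_nonneg (div_nonneg (by linarith) (w.pos n).le),
        mul_div_cancel₀ _ (w.pos n).ne']
      exact le_max_left _ _
    · simp only [hgfun, h, if_false]; exact le_trans (hC n) (le_max_right _ _)
  set g : w.Ap := ⟨gfun, max (δ/3) C, hub⟩ with hgdef
  have hne : ∀ n, gfun n ≠ 0 := by
    intro n hn
    have := hlb n
    rw [hn] at this
    simp at this
    linarith
  refine ⟨g, ?_, ?_⟩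
  · -- invertibility
    set bfun : ℕ → ℂ := fun n => (gfun n)⁻¹ * ((w.p n : ℂ))⁻¹ * ((w.p n : ℂ))⁻¹ with hbfun
    have hbabs : ∀ n, w.p n * ‖bfun n‖ ≤ 3/δ := by
      intro n
      have hpne : (w.p n : ℝ) ≠ 0 := (w.pos n).ne'
      have e : w.p n * ‖bfun n‖ = (w.p n * ‖gfun n‖)⁻¹ := by
        have habs : 0 < ‖gfun n‖ := norm_pos_iff.mpr (hne n)
        simp only [hbfun, norm_mul, norm_inv, Complex.norm_real, Real.norm_eq_abs, abs_of_pos (w.pos n)]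
        field_simp
      rw [e]
      rw [inv_le_comm₀ (lt_of_lt_of_le (by linarith) (hlb n)) (by positivity)]
      calc (3/δ : ℝ)⁻¹ = δ/3 := by rw [inv_div]
        _ ≤ _ := hlb n
    set b : w.Ap := ⟨bfun, 3/δ, hbabs⟩ with hbdef
    have : g * b = 1 := by
      apply Subtype.ext
      funext n
      show (w.p n : ℂ) * gfun n * bfun n = ((w.p n : ℂ))⁻¹
      have hpne : ((w.p n : ℝ) : ℂ) ≠ 0 := by exact_mod_cast (w.pos n).ne'
      simp only [hbfun]
      field_simp [hne n]
    exact IsUnit.of_mul_eq_one (a := g) b this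
  · have hle : ‖g - f‖ ≤ 2*δ/3 := by
      rw [GoodWeight.Ap.norm_def]
      apply ciSup_le
      intro n
      have hd : (g - f).1 n = gfun n - f.1 n := rfl
      rw [hd]
      by_cases h : w.p n * ‖f.1 n‖ < δ/3
      · simp only [hgfun, h, if_true]
        calc w.p n * ‖_ - f.1 n‖
            ≤ w.p n * (‖((((δ/3) / w.p n : ℝ)) : ℂ)‖ + ‖f.1 n‖) := by
              apply mul_le_mul_of_nonneg_left _ (w.pos n).le
              exact norm_sub_le _ _
          _ = w.p n * ‖((((δ/3) / w.p n : ℝ)) : ℂ)‖ + w.p n * ‖f.1 n‖ := by ring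
          _ ≤ δ/3 + δ/3 := by
              apply add_le_add _ h.le
              rw [Complex.norm_real, Real.norm_eq_abs, abs_of_nonneg (div_nonneg (by linarith) (w.pos n).le),
                mul_div_cancel₀ _ (w.pos n).ne']
          _ = 2*δ/3 := by ring
      · simp only [hgfun, h, if_false]
        simp
        positivity
    linarith
end

section
/- A(p) is a Hermite ring: every finitely generated stably free A(p)-module is free. (Equivalently, for all k < K, every matrix f ∈ A(p)^{K×k} admitting a left inverse g ∈ A(p)^{k×K} with g·f = I_k can be completed, by adjoining K−k further columns, to a matrix in A(p)^{K×K} that is invertible over A(p).) -/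
open scoped BigOperators

open scoped BigOperators
namespace HermiteAux
open Matrix
variable {m : ℕ}

noncomputable def Cm (w : Fin (m+1) → ℂ) : Matrix (Fin (m+1)) (Fin (m+1)) ℂ :=
  Matrix.of fun k j => if j = 0 then w k else if k = j then 1 else 0

noncomputable def Dm (w : Fin (m+1) → ℂ) : Matrix (Fin (m+1)) (Fin (m+1)) ℂ :=
  Matrix.of fun k j =>
    if j = 0 then (if k = 0 then (w 0)⁻¹ else -(w k) * (w 0)⁻¹) else if k = j then 1 else 0

lemma Dm_mul_Cm {w : Fin (m+1) → ℂ} (hw : w 0 ≠ 0) : Dm w * Cm w = 1 := by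
  ext k l
  rcases eq_or_ne l 0 with rfl | hl
  · rcases eq_or_ne k 0 with rfl | hk
    · simp [Matrix.mul_apply, Dm, Cm, Fin.sum_univ_succ, Fin.succ_ne_zero,
        (Fin.succ_ne_zero _).symm, Matrix.one_apply, inv_mul_cancel₀ hw]
    · obtain ⟨a, rfl⟩ := Fin.eq_succ_of_ne_zero hk
      simp [Matrix.mul_apply, Dm, Cm, Fin.sum_univ_succ, Fin.succ_ne_zero,
        (Fin.succ_ne_zero _).symm, Matrix.one_apply, Fin.succ_inj, ite_mul, mul_ite,
        Finset.sum_ite_eq, Finset.sum_ite_eq', inv_mul_cancel₀ hw, hw]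
  · rcases eq_or_ne k 0 with rfl | hk
    · simp [Matrix.mul_apply, Dm, Cm, Fin.sum_univ_succ, Fin.succ_ne_zero,
        (Fin.succ_ne_zero _).symm, Matrix.one_apply, Ne.symm hl, hl, ite_mul, mul_ite,
        Finset.sum_ite_eq, Finset.sum_ite_eq', eq_comm]
    · obtain ⟨a, rfl⟩ := Fin.eq_succ_of_ne_zero hk
      obtain ⟨b, rfl⟩ := Fin.eq_succ_of_ne_zero hl
      simp [Matrix.mul_apply, Dm, Cm, Fin.sum_univ_succ, Fin.succ_ne_zero,
        (Fin.succ_ne_zero _).symm, Matrix.one_apply, Fin.succ_inj, ite_mul, mul_ite,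
        Finset.sum_ite_eq, Finset.sum_ite_eq']

lemma Cm_mul_Dm {w : Fin (m+1) → ℂ} (hw : w 0 ≠ 0) : Cm w * Dm w = 1 := by
  ext k l
  rcases eq_or_ne l 0 with rfl | hl
  · rcases eq_or_ne k 0 with rfl | hk
    · simp [Matrix.mul_apply, Dm, Cm, Fin.sum_univ_succ, Fin.succ_ne_zero,
        (Fin.succ_ne_zero _).symm, Matrix.one_apply, mul_inv_cancel₀ hw]
    · obtain ⟨a, rfl⟩ := Fin.eq_succ_of_ne_zero hk
      simp [Matrix.mul_apply, Dm, Cm, Fin.sum_univ_succ, Fin.succ_ne_zero,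
        (Fin.succ_ne_zero _).symm, Matrix.one_apply, Fin.succ_inj, ite_mul, mul_ite,
        Finset.sum_ite_eq, Finset.sum_ite_eq', hw]
  · rcases eq_or_ne k 0 with rfl | hk
    · simp [Matrix.mul_apply, Dm, Cm, Fin.sum_univ_succ, Fin.succ_ne_zero,
        (Fin.succ_ne_zero _).symm, Matrix.one_apply, Ne.symm hl, hl, ite_mul, mul_ite,
        Finset.sum_ite_eq, Finset.sum_ite_eq', eq_comm]
    · obtain ⟨a, rfl⟩ := Fin.eq_succ_of_ne_zero hk
      obtain ⟨b, rfl⟩ := Fin.eq_succ_of_ne_zero hl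
      simp [Matrix.mul_apply, Dm, Cm, Fin.sum_univ_succ, Fin.succ_ne_zero,
        (Fin.succ_ne_zero _).symm, Matrix.one_apply, Fin.succ_inj, ite_mul, mul_ite,
        Finset.sum_ite_eq, Finset.sum_ite_eq']

lemma Dm_mulVec {w : Fin (m+1) → ℂ} (hw : w 0 ≠ 0) :
    (Dm w).mulVec w = Pi.single 0 1 := by
  funext k
  rcases eq_or_ne k 0 with rfl | hk
  · simp [Matrix.mulVec, dotProduct, Dm, Fin.sum_univ_succ, Fin.succ_ne_zero,
      (Fin.succ_ne_zero _).symm, inv_mul_cancel₀ hw]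
  · obtain ⟨a, rfl⟩ := Fin.eq_succ_of_ne_zero hk
    simp [Matrix.mulVec, dotProduct, Dm, Fin.sum_univ_succ, Fin.succ_ne_zero,
      (Fin.succ_ne_zero _).symm, Fin.succ_inj, ite_mul, mul_ite,
      Finset.sum_ite_eq, Finset.sum_ite_eq', Pi.single_eq_of_ne (Fin.succ_ne_zero a), hw]

noncomputable def Em (σ : Equiv.Perm (Fin (m+1))) : Matrix (Fin (m+1)) (Fin (m+1)) ℂ :=
  Matrix.of fun k j => if j = σ k then 1 else 0

lemma Em_mulVec (σ : Equiv.Perm (Fin (m+1))) (x : Fin (m+1) → ℂ) :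
    (Em σ).mulVec x = fun k => x (σ k) := by
  funext k
  simp [Matrix.mulVec, dotProduct, Em, ite_mul, one_mul, zero_mul,
    Finset.sum_ite_eq, Finset.sum_ite_eq']

lemma Em_mul_Em (σ : Equiv.Perm (Fin (m+1))) : Em σ * Em σ.symm = 1 := by
  ext k l
  simp [Matrix.mul_apply, Em, ite_mul, mul_ite, Finset.sum_ite_eq, Finset.sum_ite_eq',
    Matrix.one_apply, Equiv.eq_symm_apply, eq_comm]

lemma mul_Em_apply (M : Matrix (Fin (m+1)) (Fin (m+1)) ℂ) (σ : Equiv.Perm (Fin (m+1)))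
    (k l : Fin (m+1)) : (M * Em σ) k l = M k (σ.symm l) := by
  have : ∀ j : Fin (m+1), (M k j * if l = σ j then (1:ℂ) else 0)
      = if j = σ.symm l then M k j else 0 := by
    intro j
    by_cases h : j = σ.symm l
    · subst h; simp
    · rw [if_neg, mul_zero, if_neg h]
      intro hc; exact h (by rw [hc, Equiv.symm_apply_apply])
  simp only [Matrix.mul_apply, Em, Matrix.of_apply, this]
  simp [Finset.sum_ite_eq']

lemma Em_mul_apply (σ : Equiv.Perm (Fin (m+1))) (M : Matrix (Fin (m+1)) (Fin (m+1)) ℂ)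
    (k l : Fin (m+1)) : (Em σ * M) k l = M (σ k) l := by
  simp [Matrix.mul_apply, Em, ite_mul, one_mul, zero_mul, Finset.sum_ite_eq, Finset.sum_ite_eq']


section General
variable {R : Type} [CommRing R]

/-- From `ψ : N × R ≃ R^{m+1}` and the unimodular-completion property, cancel: `N ≃ R^m`. -/
theorem cancel_one
    (H : ∀ (m : ℕ) (v c : Fin (m+1) → R), (∑ i, c i * v i = 1) →
      ∃ α : (Fin (m+1) → R) ≃ₗ[R] (Fin (m+1) → R), α v = Pi.single 0 1)
    {N : Type} [AddCommGroup N] [Module R N] {m : ℕ}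
    (ψ : (N × R) ≃ₗ[R] (Fin (m+1) → R)) :
    Nonempty (N ≃ₗ[R] (Fin m → R)) := by
  classical
  set v : Fin (m+1) → R := ψ (0, 1) with hv
  set π : (Fin (m+1) → R) →ₗ[R] R := (LinearMap.snd R N R).comp ψ.symm.toLinearMap with hπ
  have hπv : π v = 1 := by
    simp [hπ, hv]
  have hsum : ∑ i, π (Pi.single i 1) * v i = 1 := by
    have h1 : v = ∑ i, v i • (Pi.single i 1 : Fin (m+1) → R) := by
      have := pi_eq_sum_univ v
      convert this using 2 with i
      funext j
      simp [Pi.single_apply, eq_comm]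
    calc ∑ i, π (Pi.single i 1) * v i = ∑ i, π (v i • (Pi.single i 1 : Fin (m+1) → R)) := by
          refine Finset.sum_congr rfl fun i _ => ?_
          rw [LinearMap.map_smul, smul_eq_mul, mul_comm]
      _ = π (∑ i, v i • (Pi.single i 1 : Fin (m+1) → R)) := (map_sum π _ _).symm
      _ = π v := by rw [← h1]
      _ = 1 := hπv
  obtain ⟨α, hα⟩ := H m v (fun i => π (Pi.single i 1)) hsum
  set π' : (Fin (m+1) → R) →ₗ[R] R := π.comp α.symm.toLinearMap with hπ'
  have hπ'e0 : π' (Pi.single 0 1) = 1 := by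
    have : α.symm (Pi.single 0 1) = v := by rw [← hα, LinearEquiv.symm_apply_apply]
    simp [hπ', this, hπv]
  -- N ≃ ker π
  have hmem : ∀ n : N, (ψ.toLinearMap.comp (LinearMap.inl R N R)) n ∈ LinearMap.ker π := by
    intro n
    simp [hπ, LinearMap.mem_ker]
  let f : N →ₗ[R] LinearMap.ker π :=
    LinearMap.codRestrict (LinearMap.ker π) (ψ.toLinearMap.comp (LinearMap.inl R N R)) hmem
  have hfbij : Function.Bijective f := by
    constructor
    · intro a b hab
      have : ψ (a, 0) = ψ (b, 0) := congrArg Subtype.val hab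
      have := ψ.injective this
      exact (Prod.ext_iff.mp this).1
    · rintro ⟨x, hx⟩
      refine ⟨(ψ.symm x).1, ?_⟩
      have h2 : (ψ.symm x).2 = 0 := hx
      apply Subtype.ext
      show ψ ((ψ.symm x).1, 0) = x
      rw [show ((ψ.symm x).1, (0:R)) = ψ.symm x from Prod.ext rfl h2.symm]
      exact ψ.apply_symm_apply x
  let e1 : N ≃ₗ[R] LinearMap.ker π := LinearEquiv.ofBijective f hfbij
  -- ker π ≃ ker π'
  have hmap : (LinearMap.ker π).map (α : (Fin (m+1) → R) →ₗ[R] (Fin (m+1) → R))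
      = LinearMap.ker π' := by
    ext x
    rw [Submodule.mem_map_equiv]
    simp [hπ', LinearMap.mem_ker]
  let e2 : LinearMap.ker π ≃ₗ[R] LinearMap.ker π' :=
    (α.submoduleMap (LinearMap.ker π)).trans (LinearEquiv.ofEq _ _ hmap)
  -- ker π' ≃ R^m
  let e3 : LinearMap.ker π' ≃ₗ[R] (Fin m → R) :=
    { toFun := fun y => Fin.tail y.1
      map_add' := fun y z => by funext i; rfl
      map_smul' := fun c y => by funext i; rfl
      invFun := fun x =>
        ⟨Fin.cons 0 x - (π' (Fin.cons 0 x)) • (Pi.single 0 1 : Fin (m+1) → R), by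
          simp [LinearMap.mem_ker, LinearMap.map_sub, LinearMap.map_smul, hπ'e0]⟩
      left_inv := by
        rintro ⟨y, hy⟩
        have hy' : π' y = 0 := hy
        apply Subtype.ext
        show Fin.cons 0 (Fin.tail y) - (π' (Fin.cons 0 (Fin.tail y))) • (Pi.single 0 1 : Fin (m+1) → R) = y
        have hcons : Fin.cons 0 (Fin.tail y) = y - y 0 • (Pi.single 0 1 : Fin (m+1) → R) := by
          funext j
          refine Fin.cases ?_ (fun i => ?_) j
          · simp
          · simp [Fin.tail, Pi.single_eq_of_ne (Fin.succ_ne_zero i)]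
        rw [hcons]
        rw [LinearMap.map_sub, hy', LinearMap.map_smul, hπ'e0, smul_eq_mul, mul_one, zero_sub, neg_smul, sub_neg_eq_add]
        abel
      right_inv := by
        intro x
        show Fin.tail (Fin.cons 0 x - (π' (Fin.cons 0 x)) • (Pi.single 0 1 : Fin (m+1) → R)) = x
        funext i
        have : (Pi.single (0 : Fin (m+1)) (1:R) : Fin (m+1) → R) i.succ = 0 :=
          Pi.single_eq_of_ne (Fin.succ_ne_zero i) 1
        simp [Fin.tail, this] }
  exact ⟨e1.trans (e2.trans e3)⟩

theorem free_of_stablyFree [Nontrivial R]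
    (H : ∀ (m : ℕ) (v c : Fin (m+1) → R), (∑ i, c i * v i = 1) →
      ∃ α : (Fin (m+1) → R) ≃ₗ[R] (Fin (m+1) → R), α v = Pi.single 0 1) :
    ∀ (k : ℕ) (M : Type) [AddCommGroup M] [Module R M] (m : ℕ),
      (((M × (Fin k → R))) ≃ₗ[R] (Fin m → R)) → Module.Free R M := by
  intro k
  induction k with
  | zero =>
    intro M _ _ m φ
    have e0 : M ≃ₗ[R] (M × (Fin 0 → R)) :=
      { toFun := fun x => (x, 0)
        map_add' := fun a b => by simp
        map_smul' := fun c a => by simp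
        invFun := Prod.fst
        left_inv := fun a => rfl
        right_inv := fun ⟨a, g⟩ => by
          refine Prod.ext rfl ?_
          exact Subsingleton.elim _ _ }
    exact Module.Free.of_equiv (M := Fin m → R) (M' := M) (e0.trans φ).symm
  | succ k ih =>
    intro M _ _ m φ
    -- reassociate : M × R^{k+1} ≃ (M × R^k) × R
    have epi : (Fin (k+1) → R) ≃ₗ[R] ((Fin k → R) × R) :=
      { toFun := fun f => (Fin.tail f, f 0)
        map_add' := fun a b => rfl
        map_smul' := fun c a => rfl
        invFun := fun x => Fin.cons x.2 x.1
        left_inv := fun f => by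
          funext j
          refine Fin.cases rfl (fun i => ?_) j
          · simp [Fin.tail]
        right_inv := fun x => by
          refine Prod.ext ?_ rfl
          funext i
          simp [Fin.tail] }
    have ψ : ((M × (Fin k → R)) × R) ≃ₗ[R] (Fin m → R) :=
      (LinearEquiv.prodAssoc R M (Fin k → R) R).trans
        ((LinearEquiv.prodCongr (LinearEquiv.refl R M) epi.symm).trans φ)
    match m, ψ with
    | 0, ψ =>
      exfalso
      have h1 : ψ ((0 : M × (Fin k → R)), (1:R)) = ψ (0, (0:R)) := Subsingleton.elim _ _
      have := ψ.injective h1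
      have : (1 : R) = 0 := (Prod.ext_iff.mp this).2
      exact one_ne_zero this
    | m + 1, ψ =>
      obtain ⟨e⟩ := cancel_one H ψ
      exact ih M m e

end General

end HermiteAux
namespace HermiteAux
variable {m : ℕ}

lemma Dm_abs_le {w : Fin (m+1) → ℂ} {δ V : ℝ} (hδ : 0 < δ) (h0 : δ ≤ ‖w 0‖)
    (hV : ∀ k, ‖w k‖ ≤ V) (k j : Fin (m+1)) :
    ‖Dm w k j‖ ≤ 1 + (1 + V) * δ⁻¹ := by
  have hV0 : 0 ≤ V := le_trans (norm_nonneg _) (hV 0)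
  have hδi : 0 ≤ δ⁻¹ := (inv_pos.mpr hδ).le
  have hinv : ‖(w 0)⁻¹‖ ≤ δ⁻¹ := by
    rw [norm_inv]
    exact inv_anti₀ hδ h0
  have h1 : (1:ℝ) ≤ 1 + (1 + V) * δ⁻¹ := le_add_of_nonneg_right (by positivity)
  show ‖(if j = 0 then (if k = 0 then (w 0)⁻¹ else -(w k) * (w 0)⁻¹)
    else if k = j then 1 else 0)‖ ≤ _
  split_ifs with hj hk hkj
  · calc ‖(w 0)⁻¹‖ ≤ δ⁻¹ := hinv
      _ ≤ 1 + (1 + V) * δ⁻¹ := by nlinarith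
  · rw [norm_mul, norm_neg]
    calc ‖w k‖ * ‖(w 0)⁻¹‖ ≤ V * δ⁻¹ :=
        mul_le_mul (hV k) hinv (norm_nonneg _) hV0
      _ ≤ 1 + (1 + V) * δ⁻¹ := by nlinarith
  · simpa using h1
  · simp [hδi]; positivity
lemma Cm_abs_le {w : Fin (m+1) → ℂ} {V : ℝ} (hV : ∀ k, ‖w k‖ ≤ V) (k j : Fin (m+1)) :
    ‖Cm w k j‖ ≤ 1 + V := by
  have hV0 : 0 ≤ V := le_trans (norm_nonneg _) (hV 0)
  show ‖(if j = 0 then w k else if k = j then 1 else 0)‖ ≤ _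
  split_ifs with hj hkj
  · linarith [hV k]
  · simp; linarith
  · simp; linarith
end HermiteAux

namespace GoodWeight
namespace Ap

variable {w : GoodWeight}

/-- Evaluation characters `a ↦ p n · a n` form ring homs `A(p) → ℂ`. -/
noncomputable def chi (w : GoodWeight) (n : ℕ) : w.Ap →+* ℂ where
  toFun a := (w.p n : ℂ) * a.1 n
  map_one' := by
    show (w.p n : ℂ) * ((w.p n : ℂ))⁻¹ = 1
    have h : ((w.p n : ℝ) : ℂ) ≠ 0 := by exact_mod_cast (w.pos n).ne'
    exact mul_inv_cancel₀ h
  map_mul' a b := by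
    show (w.p n : ℂ) * ((w.p n : ℂ) * a.1 n * b.1 n) = ((w.p n : ℂ) * a.1 n) * ((w.p n : ℂ) * b.1 n)
    ring
  map_zero' := by
    show (w.p n : ℂ) * 0 = 0
    ring
  map_add' a b := by
    show (w.p n : ℂ) * (a.1 n + b.1 n) = (w.p n : ℂ) * a.1 n + (w.p n : ℂ) * b.1 n
    ring

theorem chi_injective {a b : w.Ap} (h : ∀ n, chi w n a = chi w n b) : a = b := by
  apply Subtype.ext
  funext n
  have hp : ((w.p n : ℝ) : ℂ) ≠ 0 := by exact_mod_cast (w.pos n).ne'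
  exact mul_left_cancel₀ hp (h n)

theorem abs_chi (a : w.Ap) (n : ℕ) :
    ‖chi w n a‖ = w.p n * ‖a.1 n‖ := by
  show ‖(w.p n : ℂ) * a.1 n‖ = _
  rw [norm_mul, Complex.norm_real, Real.norm_eq_abs, abs_of_pos (w.pos n)]

theorem chi_bound (a : w.Ap) : ∃ C : ℝ, ∀ n, ‖chi w n a‖ ≤ C := by
  obtain ⟨C, hC⟩ := a.2
  exact ⟨C, fun n => by rw [abs_chi]; exact hC n⟩

/-- Build an element of `A(p)` from a uniformly bounded sequence of "values". -/
noncomputable def ofSeq (w : GoodWeight) (f : ℕ → ℂ) (C : ℝ) (h : ∀ n, ‖f n‖ ≤ C) :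
    w.Ap :=
  ⟨fun n => ((w.p n : ℂ))⁻¹ * f n, C, fun n => by
    rw [norm_mul, norm_inv, Complex.norm_real, Real.norm_eq_abs, abs_of_pos (w.pos n), ← mul_assoc,
      mul_inv_cancel₀ (w.pos n).ne', one_mul]
    exact h n⟩

theorem chi_ofSeq (f : ℕ → ℂ) (C : ℝ) (h : ∀ n, ‖f n‖ ≤ C) (n : ℕ) :
    chi w n (ofSeq w f C h) = f n := by
  show (w.p n : ℂ) * (((w.p n : ℂ))⁻¹ * f n) = f n
  have hp : ((w.p n : ℝ) : ℂ) ≠ 0 := by exact_mod_cast (w.pos n).ne'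
  rw [← mul_assoc, mul_inv_cancel₀ hp, one_mul]

end Ap
end GoodWeight

namespace GoodWeight
namespace Ap

open HermiteAux

variable {w : GoodWeight}

set_option maxHeartbeats 1000000 in
set_option synthInstance.maxHeartbeats 400000 in
theorem unimodular_completion (w : GoodWeight) :
    ∀ (m : ℕ) (v c : Fin (m+1) → w.Ap), (∑ i, c i * v i = 1) →
      ∃ α : (Fin (m+1) → w.Ap) ≃ₗ[w.Ap] (Fin (m+1) → w.Ap), α v = Pi.single 0 1 := by
  intro m v c hsum
  classical
  set vt : Fin (m+1) → ℕ → ℂ := fun i n => chi w n (v i) with hvt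
  set ct : Fin (m+1) → ℕ → ℂ := fun i n => chi w n (c i) with hct
  -- uniform bounds
  obtain ⟨V, hV0, hV⟩ : ∃ V : ℝ, 0 ≤ V ∧ ∀ i n, ‖vt i n‖ ≤ V := by
    choose C hC using fun i => chi_bound (v i)
    refine ⟨∑ i, max (C i) 0, Finset.sum_nonneg fun i _ => le_max_right _ _, fun i n => ?_⟩
    calc ‖vt i n‖ ≤ C i := hC i n
      _ ≤ max (C i) 0 := le_max_left _ _
      _ ≤ ∑ i, max (C i) 0 :=
        Finset.single_le_sum (fun i _ => le_max_right (C i) 0) (Finset.mem_univ i)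
  obtain ⟨Cc, hCc0, hCc⟩ : ∃ Cc : ℝ, 0 ≤ Cc ∧ ∀ i n, ‖ct i n‖ ≤ Cc := by
    choose C hC using fun i => chi_bound (c i)
    refine ⟨∑ i, max (C i) 0, Finset.sum_nonneg fun i _ => le_max_right _ _, fun i n => ?_⟩
    calc ‖ct i n‖ ≤ C i := hC i n
      _ ≤ max (C i) 0 := le_max_left _ _
      _ ≤ ∑ i, max (C i) 0 :=
        Finset.single_le_sum (fun i _ => le_max_right (C i) 0) (Finset.mem_univ i)
  set δ : ℝ := (((m:ℝ)+1) * Cc + 1)⁻¹ with hδdef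
  have hδ : 0 < δ := by
    apply inv_pos.mpr
    have : 0 ≤ ((m:ℝ)+1) * Cc := by positivity
    linarith
  -- pointwise unimodularity
  have hpoint : ∀ n, ∑ i, ct i n * vt i n = 1 := by
    intro n
    have h1 := congrArg (chi w n) hsum
    rw [map_sum, map_one] at h1
    simpa only [map_mul] using h1
  -- pivot existence
  have hex : ∀ n, ∃ i, δ ≤ ‖vt i n‖ := by
    intro n
    by_contra hcon
    push_neg at hcon
    have h1 : (1:ℝ) ≤ ∑ i, ‖ct i n * vt i n‖ := by
      have := norm_sum_le Finset.univ (fun i => ct i n * vt i n)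
      rw [hpoint n] at this
      simpa using this
    have h2 : ∑ i, ‖ct i n * vt i n‖ ≤ ∑ _i : Fin (m+1), Cc * δ := by
      refine Finset.sum_le_sum fun i _ => ?_
      rw [norm_mul]
      exact mul_le_mul (hCc i n) (hcon i).le (norm_nonneg _) hCc0
    have h3 : ((m:ℝ)+1) * (Cc * δ) < 1 := by
      have hlt : ((m:ℝ)+1) * Cc < ((m:ℝ)+1) * Cc + 1 := by linarith
      have := mul_lt_mul_of_pos_right hlt hδ
      rw [hδdef] at this ⊢
      rw [mul_inv_cancel₀ (by positivity : ((m:ℝ)+1) * Cc + 1 ≠ 0)] at this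
      calc ((m:ℝ)+1) * (Cc * (((m:ℝ)+1) * Cc + 1)⁻¹)
          = (((m:ℝ)+1) * Cc) * (((m:ℝ)+1) * Cc + 1)⁻¹ := by ring
        _ < 1 := this
    have h5 : (∑ _i : Fin (m+1), Cc * δ) = ((m:ℝ)+1) * (Cc * δ) := by
      rw [Finset.sum_const, Finset.card_univ, Fintype.card_fin, nsmul_eq_mul]
      push_cast
      ring
    rw [h5] at h2
    linarith
  -- pivots, swaps and the pointwise matrices
  set idx : ℕ → Fin (m+1) := fun n => (hex n).choose with hidxdef
  have hidx : ∀ n, δ ≤ ‖vt (idx n) n‖ := fun n => (hex n).choose_spec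
  set σn : ℕ → Equiv.Perm (Fin (m+1)) := fun n => Equiv.swap 0 (idx n) with hσdef
  have hσsymm : ∀ n, (σn n).symm = σn n := fun n => Equiv.symm_swap 0 (idx n)
  set wt : ℕ → Fin (m+1) → ℂ := fun n k => vt (σn n k) n with hwtdef
  have hwt0 : ∀ n, wt n 0 = vt (idx n) n := by
    intro n
    show vt (Equiv.swap 0 (idx n) 0) n = vt (idx n) n
    rw [Equiv.swap_apply_left]
  have hwδ : ∀ n, δ ≤ ‖wt n 0‖ := fun n => (hwt0 n).symm ▸ hidx n
  have hwne : ∀ n, wt n 0 ≠ 0 := by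
    intro n h
    have h2 := hwδ n
    rw [h, norm_zero] at h2
    exact absurd h2 (not_le.mpr hδ)
  have hwV : ∀ n k, ‖wt n k‖ ≤ V := fun n k => hV _ n
  set Amat : ℕ → Matrix (Fin (m+1)) (Fin (m+1)) ℂ := fun n => Dm (wt n) * Em (σn n) with hAdef
  set Bmat : ℕ → Matrix (Fin (m+1)) (Fin (m+1)) ℂ := fun n => Em (σn n) * Cm (wt n) with hBdef
  have hAB : ∀ n, Amat n * Bmat n = 1 := by
    intro n
    have hEE : Em (σn n) * Em (σn n) = 1 := by
      have := Em_mul_Em (σn n)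
      rwa [hσsymm n] at this
    calc Dm (wt n) * Em (σn n) * (Em (σn n) * Cm (wt n))
        = Dm (wt n) * (Em (σn n) * Em (σn n)) * Cm (wt n) := by
          rw [mul_assoc, mul_assoc, mul_assoc]
      _ = Dm (wt n) * Cm (wt n) := by rw [hEE, mul_one]
      _ = 1 := Dm_mul_Cm (hwne n)
  have hBA : ∀ n, Bmat n * Amat n = 1 := by
    intro n
    have hEE : Em (σn n) * Em (σn n) = 1 := by
      have := Em_mul_Em (σn n)
      rwa [hσsymm n] at this
    calc Em (σn n) * Cm (wt n) * (Dm (wt n) * Em (σn n))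
        = Em (σn n) * (Cm (wt n) * Dm (wt n)) * Em (σn n) := by
          rw [mul_assoc, mul_assoc, mul_assoc]
      _ = Em (σn n) * Em (σn n) := by rw [Cm_mul_Dm (hwne n), mul_one]
      _ = 1 := hEE
  have hAv : ∀ n, (Amat n).mulVec (fun i => vt i n) = Pi.single 0 1 := by
    intro n
    show (Dm (wt n) * Em (σn n)).mulVec (fun i => vt i n) = Pi.single 0 1
    rw [← Matrix.mulVec_mulVec, Em_mulVec]
    exact Dm_mulVec (hwne n)
  -- entry bounds
  set K : ℝ := 1 + (1 + V) * δ⁻¹ with hKdef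
  have hAbd : ∀ n k j, ‖Amat n k j‖ ≤ K := by
    intro n k j
    show ‖(Dm (wt n) * Em (σn n)) k j‖ ≤ K
    rw [mul_Em_apply]
    exact Dm_abs_le hδ (hwδ n) (hwV n) _ _
  have hBbd : ∀ n k j, ‖Bmat n k j‖ ≤ 1 + V := by
    intro n k j
    show ‖(Em (σn n) * Cm (wt n)) k j‖ ≤ 1 + V
    rw [Em_mul_apply]
    exact Cm_abs_le (hwV n) _ _
  -- matrices over A(p)
  set MA : Matrix (Fin (m+1)) (Fin (m+1)) w.Ap :=
    Matrix.of fun k j => ofSeq w (fun n => Amat n k j) K (fun n => hAbd n k j) with hMAdef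
  set MB : Matrix (Fin (m+1)) (Fin (m+1)) w.Ap :=
    Matrix.of fun k j => ofSeq w (fun n => Bmat n k j) (1+V) (fun n => hBbd n k j) with hMBdef
  have hchiMA : ∀ n, MA.map (chi w n) = Amat n := by
    intro n; ext k j
    show chi w n (ofSeq w (fun n => Amat n k j) K (fun n => hAbd n k j)) = Amat n k j
    exact chi_ofSeq (fun n => Amat n k j) K (fun n => hAbd n k j) n
  have hchiMB : ∀ n, MB.map (chi w n) = Bmat n := by
    intro n; ext k j
    show chi w n (ofSeq w (fun n => Bmat n k j) (1+V) (fun n => hBbd n k j)) = Bmat n k j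
    exact chi_ofSeq (fun n => Bmat n k j) (1+V) (fun n => hBbd n k j) n
  have hone : ∀ n, (1 : Matrix (Fin (m+1)) (Fin (m+1)) w.Ap).map (chi w n)
      = (1 : Matrix (Fin (m+1)) (Fin (m+1)) ℂ) := by
    intro n
    rw [← RingHom.mapMatrix_apply, map_one]
  have hmulmap : ∀ n (X Y : Matrix (Fin (m+1)) (Fin (m+1)) w.Ap),
      (X * Y).map (chi w n) = X.map (chi w n) * Y.map (chi w n) := by
    intro n X Y
    rw [← RingHom.mapMatrix_apply, map_mul, RingHom.mapMatrix_apply, RingHom.mapMatrix_apply]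
  have hMAB : MA * MB = 1 := by
    ext k j
    apply chi_injective
    intro n
    calc chi w n ((MA * MB) k j)
        = ((MA * MB).map (chi w n)) k j := rfl
      _ = (MA.map (chi w n) * MB.map (chi w n)) k j := by rw [hmulmap n]
      _ = (1 : Matrix (Fin (m+1)) (Fin (m+1)) ℂ) k j := by rw [hchiMA n, hchiMB n, hAB n]
      _ = ((1 : Matrix (Fin (m+1)) (Fin (m+1)) w.Ap).map (chi w n)) k j := by rw [hone n]
      _ = chi w n ((1 : Matrix (Fin (m+1)) (Fin (m+1)) w.Ap) k j) := rfl
  have hMBA : MB * MA = 1 := by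
    ext k j
    apply chi_injective
    intro n
    calc chi w n ((MB * MA) k j)
        = ((MB * MA).map (chi w n)) k j := rfl
      _ = (MB.map (chi w n) * MA.map (chi w n)) k j := by rw [hmulmap n]
      _ = (1 : Matrix (Fin (m+1)) (Fin (m+1)) ℂ) k j := by rw [hchiMB n, hchiMA n, hBA n]
      _ = ((1 : Matrix (Fin (m+1)) (Fin (m+1)) w.Ap).map (chi w n)) k j := by rw [hone n]
      _ = chi w n ((1 : Matrix (Fin (m+1)) (Fin (m+1)) w.Ap) k j) := rfl
  -- the action on v
  have hMAv : MA.mulVec v = Pi.single 0 1 := by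
    funext k
    apply chi_injective
    intro n
    have h1 : chi w n (MA.mulVec v k) = ∑ j, chi w n (MA k j) * chi w n (v j) := by
      show chi w n (∑ j, MA k j * v j) = _
      rw [map_sum]
      exact Finset.sum_congr rfl fun j _ => map_mul _ _ _
    have h2 : ∀ j, chi w n (MA k j) = Amat n k j := fun j =>
      chi_ofSeq (fun n => Amat n k j) K (fun n => hAbd n k j) n
    have h3 : chi w n (MA.mulVec v k) = (Amat n).mulVec (fun i => vt i n) k := by
      rw [h1]
      exact Finset.sum_congr rfl fun j _ => by rw [h2 j]
    rw [h3, hAv n]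
    rcases eq_or_ne k 0 with rfl | hk
    · simp only [Pi.single_eq_same]
      exact (map_one (chi w n)).symm
    · rw [Pi.single_eq_of_ne hk, Pi.single_eq_of_ne hk, map_zero]
  -- assemble the linear equivalence
  refine ⟨LinearEquiv.ofLinear (Matrix.toLin' MA) (Matrix.toLin' MB) ?_ ?_, ?_⟩
  · rw [← Matrix.toLin'_mul, hMAB, Matrix.toLin'_one]
  · rw [← Matrix.toLin'_mul, hMBA, Matrix.toLin'_one]
  · show Matrix.toLin' MA v = Pi.single 0 1
    rw [Matrix.toLin'_apply, hMAv]

end Ap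
end GoodWeight

/-- `A(p)` is a Hermite ring: every finitely generated stably free
`A(p)`-module is free. -/
theorem hermiteRing (w : GoodWeight) (hg : w.Grows)
    (M : Type) [AddCommGroup M] [Module w.Ap M] [Module.Finite w.Ap M]
    (hsf : ∃ (k m : ℕ), Nonempty ((M × (Fin k → w.Ap)) ≃ₗ[w.Ap] (Fin m → w.Ap))) :
    Module.Free w.Ap M := by
  obtain ⟨k, m, ⟨φ⟩⟩ := hsf
  haveI : Nontrivial w.Ap := by
    refine ⟨⟨1, 0, fun h => ?_⟩⟩
    have h0 := congrArg (GoodWeight.Ap.chi w 0) h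
    rw [map_one, map_zero] at h0
    exact one_ne_zero h0
  exact HermiteAux.free_of_stablyFree (GoodWeight.Ap.unimodular_completion w) k M m φ
end

section
/- The map k ↦ φ_k from ℕ₀ to the maximal ideal space M(A(p)) is injective, and for each k₀ ∈ ℕ₀ a net (φ_{k_i})_{i∈I} converges to φ_{k₀} in the Gelfand (weak-*) topology of M(A(p)) if and only if (k_i)_{i∈I} is eventually constant equal to k₀; consequently {φ_k : k ∈ ℕ₀}, with the topology induced from M(A(p)), is homeomorphic to ℕ₀ with the discrete topology. -/
open scoped BigOperators

namespace GoodWeight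

/-- The evaluation functional `f ↦ p(k) f̂(k)`, as a linear map. -/
noncomputable def evalLM (w : GoodWeight) (k : ℕ) : w.Ap →ₗ[ℂ] ℂ where
  toFun f := (w.p k : ℂ) * f.1 k
  map_add' a b := by
    show (w.p k : ℂ) * (a.1 k + b.1 k) = (w.p k : ℂ) * a.1 k + (w.p k : ℂ) * b.1 k
    ring
  map_smul' c a := by
    show (w.p k : ℂ) * (c * a.1 k) = c * ((w.p k : ℂ) * a.1 k)
    ring

/-- The evaluation character `φ_k : f ↦ p(k) f̂(k)` of `A(p)`, as an element of the
maximal ideal space (character space) of `A(p)` with its Gelfand (weak-*) topology. -/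
noncomputable def charAt (w : GoodWeight) (k : ℕ) : WeakDual.characterSpace ℂ w.Ap := by
  refine ⟨(evalLM w k).mkContinuous 1 (fun f => ?_), ?_, ?_⟩
  · rw [one_mul]
    show ‖(w.p k : ℂ) * f.1 k‖ ≤ ‖f‖
    rw [norm_mul, Complex.norm_real, Real.norm_eq_abs, abs_of_pos (w.pos k)]
    exact Ap.le_norm f k
  · intro h
    have h2 := congrArg (fun ψ : WeakDual ℂ w.Ap => ψ (1 : w.Ap)) h
    have h1 : (w.p k : ℂ) * ((w.p k : ℂ))⁻¹ = 0 := h2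
    rw [mul_inv_cancel₀ (by exact_mod_cast (w.pos k).ne' : ((w.p k : ℝ) : ℂ) ≠ 0)] at h1
    exact one_ne_zero h1
  · intro x y
    show (w.p k : ℂ) * ((w.p k : ℂ) * x.1 k * y.1 k)
        = ((w.p k : ℂ) * x.1 k) * ((w.p k : ℂ) * y.1 k)
    ring

end GoodWeight



namespace GoodWeight

/-- The "delta" element of `A(p)`: coefficient `(p k)⁻¹` at `k`, `0` elsewhere. -/
noncomputable def delta (w : GoodWeight) (k : ℕ) : w.Ap :=
  ⟨fun n => if n = k then ((w.p k : ℂ))⁻¹ else 0, by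
    refine ⟨1, fun n => ?_⟩
    beta_reduce
    by_cases h : n = k
    · subst h
      rw [if_pos rfl, norm_inv, Complex.norm_real, Real.norm_eq_abs, abs_of_pos (w.pos n),
        mul_inv_cancel₀ (w.pos n).ne']
    · rw [if_neg h]; simp⟩

theorem charAt_apply (w : GoodWeight) (k : ℕ) (f : w.Ap) :
    charAt w k f = (w.p k : ℂ) * f.1 k := rfl

theorem charAt_delta (w : GoodWeight) (j k : ℕ) :
    charAt w j (delta w k) = if j = k then 1 else 0 := by
  rw [charAt_apply]
  show (w.p j : ℂ) * (if j = k then ((w.p k : ℂ))⁻¹ else 0) = _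
  by_cases h : j = k
  · subst h
    rw [if_pos rfl, if_pos rfl,
      mul_inv_cancel₀ (by exact_mod_cast (w.pos j).ne' : ((w.p j : ℝ) : ℂ) ≠ 0)]
  · rw [if_neg h, if_neg h, mul_zero]

theorem eval_delta_continuous (w : GoodWeight) (k : ℕ) :
    Continuous fun ψ : WeakDual.characterSpace ℂ w.Ap => ψ (delta w k) :=
  (WeakDual.eval_continuous (delta w k)).comp continuous_subtype_val

theorem charAt_injective (w : GoodWeight) : Function.Injective (charAt w) := by
  intro j k h
  have := congrArg (fun ψ => ψ (delta w k)) h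
  simp only [charAt_delta, if_pos rfl] at this
  by_contra hjk
  rw [if_neg hjk] at this
  exact zero_ne_one this

theorem range_discrete (w : GoodWeight) :
    DiscreteTopology (Set.range (charAt w)) := by
  rw [discreteTopology_iff_isOpen_singleton]
  rintro ⟨ψ, j, rfl⟩
  have : ({⟨charAt w j, j, rfl⟩} : Set (Set.range (charAt w)))
      = Subtype.val ⁻¹' {ψ : WeakDual.characterSpace ℂ w.Ap |
          ψ (delta w j) ∈ Metric.ball (1 : ℂ) (1/2)} := by
    ext ⟨ψ, i, rfl⟩
    simp only [Set.mem_singleton_iff, Set.mem_preimage, Set.mem_setOf_eq, charAt_delta,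
      Subtype.mk.injEq, Metric.mem_ball]
    constructor
    · intro h
      have := charAt_injective w (congrArg Subtype.val h)
      subst this
      simp
    · intro h
      by_cases hij : i = j
      · subst hij; rfl
      · rw [if_neg hij] at h
        norm_num [dist_eq_norm] at h
  rw [this]
  exact ((eval_delta_continuous w j).isOpen_preimage _ Metric.isOpen_ball).preimage
    continuous_subtype_val

end GoodWeight

/-- `k ↦ φ_k` is injective; a net `(φ_{k_i})` converges to `φ_{k₀}` in the
Gelfand topology of the maximal ideal space iff `(k_i)` is eventually constant `= k₀`;
hence `{φ_k : k ∈ ℕ₀}` with the induced topology is homeomorphic to discrete `ℕ`. -/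
theorem pointCharacters (w : GoodWeight) (hg : w.Grows) :
    Function.Injective (GoodWeight.charAt w) ∧
    (∀ (I : Type) [Preorder I] [Nonempty I] [IsDirected I (· ≤ ·)] (k : I → ℕ) (k₀ : ℕ),
      Filter.Tendsto (fun i => GoodWeight.charAt w (k i)) Filter.atTop
          (nhds (GoodWeight.charAt w k₀)) ↔
        (∀ᶠ i in Filter.atTop, k i = k₀)) ∧
    Nonempty (ℕ ≃ₜ Set.range (GoodWeight.charAt w)) := by
  refine ⟨GoodWeight.charAt_injective w, ?_, ?_⟩
  · intro I _ _ _ k k₀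
    constructor
    · intro h
      have h1 : Filter.Tendsto (fun i => GoodWeight.charAt w (k i) (GoodWeight.delta w k₀))
          Filter.atTop (nhds (GoodWeight.charAt w k₀ (GoodWeight.delta w k₀))) :=
        ((GoodWeight.eval_delta_continuous w k₀).tendsto _).comp h
      rw [GoodWeight.charAt_delta, if_pos rfl] at h1
      have h2 := h1 (Metric.ball_mem_nhds (1:ℂ) one_half_pos)
      rw [Filter.mem_map] at h2
      filter_upwards [h2] with i hi
      simp only [Set.mem_preimage, GoodWeight.charAt_delta, Metric.mem_ball] at hi
      by_contra hne
      rw [if_neg hne] at hi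
      norm_num [dist_eq_norm] at hi
    · intro h
      refine Filter.Tendsto.congr' ?_ tendsto_const_nhds
      filter_upwards [h] with i hi
      rw [hi]
  · have := GoodWeight.range_discrete w
    exact ⟨{
      toEquiv := Equiv.ofInjective _ (GoodWeight.charAt_injective w)
      continuous_toFun := continuous_of_discreteTopology
      continuous_invFun := continuous_of_discreteTopology }⟩
end

section
/- Let m, n ∈ ℕ, A ∈ ℂ^{m×n}, b ∈ ℂ^{m×1}, and δ > 0 be such that ‖A*y‖₂ ≥ δ|⟨y, b⟩₂| for all y ∈ ℂ^{m×1}. Then there exists x ∈ ℂ^{n×1} with Ax = b and ‖x‖₂ ≤ 1/δ. -/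
open scoped BigOperators

/-- If `‖A* y‖₂ ≥ δ |⟨y, b⟩₂|` for all `y ∈ ℂᵐ`, then `Ax = b` has a
solution `x ∈ ℂⁿ` with `‖x‖₂ ≤ 1/δ`. -/
theorem solvability_linear_algebra (m n : ℕ) (hm : 0 < m) (hn : 0 < n)
    (A : Matrix (Fin m) (Fin n) ℂ) (b : Fin m → ℂ) (δ : ℝ) (hδ : 0 < δ)
    (h : ∀ y : Fin m → ℂ,
      δ * ‖∑ i, starRingEnd ℂ (y i) * b i‖
        ≤ Real.sqrt (∑ j, ‖A.conjTranspose.mulVec y j‖ ^ 2)) :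
    ∃ x : Fin n → ℂ, A.mulVec x = b ∧ Real.sqrt (∑ j, ‖x j‖ ^ 2) ≤ 1 / δ := by
  classical
  let E := EuclideanSpace ℂ (Fin m)
  let F := EuclideanSpace ℂ (Fin n)
  let T : F →ₗ[ℂ] E := Matrix.toEuclideanLin A
  let Tad : E →ₗ[ℂ] F := LinearMap.adjoint T
  let S : E →ₗ[ℂ] E := T ∘ₗ Tad
  let b' : E := WithLp.toLp 2 b
  -- translate the hypothesis
  have h' : ∀ y : E, δ * ‖(inner ℂ y b')‖ ≤ ‖Tad y‖ := by
    intro y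
    have hTad : Tad y = WithLp.toLp 2 (A.conjTranspose.mulVec y.ofLp) := by
      show (LinearMap.adjoint T) y = _
      rw [← Matrix.toEuclideanLin_conjTranspose_eq_adjoint]
      rfl
    have h1 : ‖(inner ℂ y b')‖ = ‖∑ i, starRingEnd ℂ (y.ofLp i) * b i‖ := by
      rw [PiLp.inner_apply]
      simp [RCLike.inner_apply, b', mul_comm]
    have h2 : ‖Tad y‖ = Real.sqrt (∑ j, ‖A.conjTranspose.mulVec y.ofLp j‖ ^ 2) := by
      rw [hTad, EuclideanSpace.norm_eq]
    rw [h1, h2]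
    exact h y.ofLp
  -- S is self-adjoint
  have hSsa : LinearMap.adjoint S = S := by
    show LinearMap.adjoint (T ∘ₗ LinearMap.adjoint T) = T ∘ₗ LinearMap.adjoint T
    rw [LinearMap.adjoint_comp, LinearMap.adjoint_adjoint]
  -- kernel of S is contained in kernel of Tad
  have hker : ∀ y : E, S y = 0 → Tad y = 0 := by
    intro y hy
    have h0 : (inner ℂ (Tad y) (Tad y)) = 0 := by
      have : (inner ℂ (Tad y) (Tad y)) = inner ℂ y (S y) := by
        rw [LinearMap.adjoint_inner_left]
        rfl
      rw [this, hy, inner_zero_right]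
    exact inner_self_eq_zero.mp h0
  -- b' is orthogonal to ker S
  have hb : b' ∈ (LinearMap.ker S)ᗮ := by
    intro u hu
    have hTadu : Tad u = 0 := hker u (LinearMap.mem_ker.mp hu)
    have := h' u
    rw [hTadu, norm_zero] at this
    have hn0 : ‖(inner ℂ u b')‖ ≤ 0 := by
      nlinarith [norm_nonneg (inner ℂ u b')]
    have : (inner ℂ u b') = 0 := norm_le_zero_iff.mp hn0
    exact this
  -- range S = (ker S)ᗮ
  have hrange : LinearMap.range S = (LinearMap.ker S)ᗮ := by
    apply Submodule.eq_of_le_of_finrank_eq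
    · rintro _ ⟨w, rfl⟩ u hu
      have : (inner ℂ (S u) w) = 0 := by
        rw [LinearMap.mem_ker.mp hu, inner_zero_left]
      calc (inner ℂ u (S w)) = inner ℂ (LinearMap.adjoint S u) w := by
            rw [LinearMap.adjoint_inner_left]
        _ = inner ℂ (S u) w := by rw [hSsa]
        _ = 0 := this
    · have h1 := LinearMap.finrank_range_add_finrank_ker S
      have h2 := Submodule.finrank_add_finrank_orthogonal (K := LinearMap.ker S)
      omega
  obtain ⟨z, hz⟩ : b' ∈ LinearMap.range S := hrange ▸ hb
  refine ⟨Tad z, ?_, ?_⟩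
  · -- A.mulVec (Tad z) = b
    have : T (Tad z) = b' := hz
    exact congrArg WithLp.ofLp this
  · -- norm bound
    have hxnorm : Real.sqrt (∑ j, ‖(Tad z).ofLp j‖ ^ 2) = ‖Tad z‖ := by
      rw [EuclideanSpace.norm_eq]
    rw [hxnorm]
    have hsq : (inner ℂ z b') = (‖Tad z‖ : ℂ) ^ 2 := by
      have h1 : (inner ℂ (Tad z) (Tad z)) = inner ℂ z b' := by
        rw [LinearMap.adjoint_inner_left]
        exact congrArg _ hz
      rw [← h1, inner_self_eq_norm_sq_to_K]
      norm_cast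
    have hkey : δ * ‖Tad z‖ ^ 2 ≤ ‖Tad z‖ := by
      have := h' z
      rw [hsq] at this
      have : δ * ‖((‖Tad z‖ : ℂ) ^ 2)‖ ≤ ‖Tad z‖ := this
      simpa [norm_pow, Complex.norm_real, abs_of_nonneg (norm_nonneg (Tad z))] using this
    rcases eq_or_lt_of_le (norm_nonneg (Tad z)) with h0 | h0
    · rw [← h0]
      positivity
    · rw [le_div_iff₀ hδ, mul_comm]
      nlinarith
end

section
/- Let m, n ∈ ℕ, A ∈ A(p)^{m×n} and b ∈ A(p)^{m×1}. The following are equivalent: (1) there exists x ∈ A(p)^{n×1} such that A∗x = b; (2) there exists δ > 0 such that for all k ∈ ℕ₀ and all y ∈ ℂ^{m×1}, ‖(\hat{A}(k))* y‖₂ ≥ δ|⟨y, \hat{b}(k)⟩₂|. -/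
open scoped BigOperators

set_option maxHeartbeats 1000000

local notation "⟪" x ", " y "⟫" => @inner ℂ _ _ x y

private lemma key_exists {m n : ℕ} (M : Matrix (Fin m) (Fin n) ℂ) (c : EuclideanSpace ℂ (Fin m))
    (δ : ℝ) (hδ : 0 < δ)
    (h : ∀ y : EuclideanSpace ℂ (Fin m),
      δ * ‖⟪y, c⟫‖ ≤ ‖LinearMap.adjoint (Matrix.toEuclideanLin M) y‖) :
    ∃ v : EuclideanSpace ℂ (Fin n), Matrix.toEuclideanLin M v = c ∧ ‖v‖ ≤ 1 / δ := by
  set T := Matrix.toEuclideanLin M with hT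
  set T' := LinearMap.adjoint T with hT'
  have hcmem : c ∈ LinearMap.range T := by
    obtain ⟨c₁, hc₁, c₂, hc₂, hsum⟩ :=
      (LinearMap.range T : Submodule ℂ (EuclideanSpace ℂ (Fin m))).exists_add_mem_mem_orthogonal c
    have hT'c₂ : T' c₂ = 0 := by
      rw [← inner_self_eq_zero (𝕜 := ℂ) (x := T' c₂)]
      calc ⟪T' c₂, T' c₂⟫ = ⟪c₂, T (T' c₂)⟫ := LinearMap.adjoint_inner_left T (T' c₂) c₂
        _ = 0 := (Submodule.mem_orthogonal' _ _).1 hc₂ _ ⟨T' c₂, rfl⟩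
    have h2 : δ * ‖⟪c₂, c⟫‖ ≤ 0 := by simpa [hT'c₂] using h c₂
    have hinner : ⟪c₂, c⟫ = ⟪c₂, c₂⟫ := by
      rw [hsum, inner_add_right, (Submodule.mem_orthogonal' _ _).1 hc₂ _ hc₁, zero_add]
    rw [hinner] at h2
    have hn0 : ‖⟪c₂, c₂⟫‖ = 0 :=
      le_antisymm (by nlinarith [norm_nonneg ⟪c₂, c₂⟫]) (norm_nonneg _)
    have hc₂0 : c₂ = 0 := inner_self_eq_zero.mp (norm_eq_zero.mp hn0)
    exact hsum ▸ hc₂0 ▸ (by simpa using hc₁)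
  obtain ⟨v₀, hv₀⟩ := hcmem
  obtain ⟨v, hv, z, hz, hsum⟩ :=
    (LinearMap.range T' : Submodule ℂ (EuclideanSpace ℂ (Fin n))).exists_add_mem_mem_orthogonal v₀
  have hTz : T z = 0 := by
    rw [← inner_self_eq_zero (𝕜 := ℂ) (x := T z)]
    calc ⟪T z, T z⟫ = ⟪z, T' (T z)⟫ := (LinearMap.adjoint_inner_right T z (T z)).symm
      _ = 0 := (Submodule.mem_orthogonal' _ _).1 hz _ ⟨T z, rfl⟩
  have hTv : T v = c := by
    have : T v₀ = T v + T z := by rw [hsum, map_add]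
    rw [← hv₀, this, hTz, add_zero]
  obtain ⟨y₀, hy₀⟩ := hv
  have hinner : ⟪y₀, c⟫ = ⟪v, v⟫ := by
    rw [← hTv, ← LinearMap.adjoint_inner_left T v y₀, hy₀]
  have hbound := h y₀
  rw [hinner, hy₀] at hbound
  have hvv : ‖⟪v, v⟫‖ = ‖v‖ ^ 2 := by
    rw [inner_self_eq_norm_sq_to_K, norm_pow]
    simp [RCLike.norm_ofReal, abs_of_nonneg (norm_nonneg v)]
  rw [hvv] at hbound
  refine ⟨v, hTv, ?_⟩
  rcases eq_or_lt_of_le (norm_nonneg v) with h0 | h0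
  · rw [← h0]; positivity
  · rw [le_div_iff₀ hδ]; nlinarith

/-- coefficient evaluation as an additive monoid hom -/
private def coeffHom (w : GoodWeight) (k : ℕ) : w.Ap →+ ℂ where
  toFun a := a.1 k
  map_zero' := rfl
  map_add' _ _ := rfl

private lemma coord_le_norm {n : ℕ} (u : EuclideanSpace ℂ (Fin n)) (j : Fin n) :
    ‖u j‖ ≤ ‖u‖ := by
  rw [EuclideanSpace.norm_eq]
  have h1 : ‖u j‖ ^ 2 ≤ ∑ i, ‖u i‖ ^ 2 :=
    Finset.single_le_sum (f := fun i => ‖u i‖ ^ 2) (fun i _ => by positivity) (Finset.mem_univ j)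
  calc ‖u j‖ = Real.sqrt (‖u j‖ ^ 2) := (Real.sqrt_sq (norm_nonneg _)).symm
    _ ≤ _ := Real.sqrt_le_sqrt h1


/-- Solvability of `A ∗ x = b` over `A(p)`: a solution exists iff the
corona-type condition `‖(Â(k))* y‖₂ ≥ δ |⟨y, b̂(k)⟩₂|` holds uniformly in `k`. -/
theorem solvability_Ap (w : GoodWeight) (m n : ℕ) (hm : 0 < m) (hn : 0 < n)
    (hg : w.Grows) (A : Matrix (Fin m) (Fin n) w.Ap) (b : Fin m → w.Ap) :
    (∃ x : Fin n → w.Ap, A.mulVec x = b) ↔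
    (∃ δ : ℝ, 0 < δ ∧ ∀ (k : ℕ) (y : Fin m → ℂ),
      δ * ‖∑ i, starRingEnd ℂ (y i) * (b i).1 k‖
        ≤ Real.sqrt (∑ j,
            ‖(Matrix.of fun i j => (A i j).1 k).conjTranspose.mulVec y j‖ ^ 2)) := by
  classical
  set Ah : ℕ → Matrix (Fin m) (Fin n) ℂ := fun k => Matrix.of fun i j => (A i j).1 k with hAh
  set bh : ℕ → EuclideanSpace ℂ (Fin m) := fun k => WithLp.toLp 2 (fun i => (b i).1 k) with hbh
  have hLHS : ∀ (k : ℕ) (y : Fin m → ℂ),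
      ‖∑ i, starRingEnd ℂ (y i) * (b i).1 k‖ = ‖⟪WithLp.toLp 2 y, bh k⟫‖ := by
    intro k y
    congr 1
    simp [hbh, PiLp.inner_apply, mul_comm]
  have hRHS : ∀ (k : ℕ) (y : Fin m → ℂ),
      Real.sqrt (∑ j, ‖(Ah k).conjTranspose.mulVec y j‖ ^ 2)
        = ‖LinearMap.adjoint (Matrix.toEuclideanLin (Ah k)) (WithLp.toLp 2 y)‖ := by
    intro k y
    rw [← Matrix.toEuclideanLin_conjTranspose_eq_adjoint, EuclideanSpace.norm_eq]
    congr 1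
  constructor
  · rintro ⟨x, hx⟩
    set xh : ℕ → EuclideanSpace ℂ (Fin n) := fun k => WithLp.toLp 2 (fun j => (x j).1 k) with hxh
    have hbhk : ∀ k, bh k = (w.p k : ℂ) • Matrix.toEuclideanLin (Ah k) (xh k) := by
      intro k
      ext i
      have h1 : (b i).1 k = (∑ j, A i j * x j).1 k := by rw [← hx]; rfl
      have h2 : (∑ j, A i j * x j).1 k = ∑ j, ((A i j) * (x j)).1 k :=
        map_sum (coeffHom w k) _ _
      show (b i).1 k = (w.p k : ℂ) * ((Ah k).mulVec (xh k) i)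
      rw [h1, h2]
      show (∑ j, (w.p k : ℂ) * (A i j).1 k * (x j).1 k)
          = (w.p k : ℂ) * ∑ j, (A i j).1 k * (x j).1 k
      rw [Finset.mul_sum]
      exact Finset.sum_congr rfl fun j _ => by ring
    set C : ℝ := Real.sqrt (∑ j, ‖x j‖ ^ 2) + 1 with hC
    have hCpos : 0 < C := by positivity
    refine ⟨1 / C, by positivity, ?_⟩
    intro k y0
    set y : EuclideanSpace ℂ (Fin m) := WithLp.toLp 2 y0 with hy
    rw [hLHS k y0, hRHS k y0]
    have hkey : ‖⟪y, bh k⟫‖ ≤ C * ‖LinearMap.adjoint (Matrix.toEuclideanLin (Ah k)) y‖ := by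
      set T := Matrix.toEuclideanLin (Ah k)
      have e1 : ⟪y, bh k⟫ = (w.p k : ℂ) * ⟪LinearMap.adjoint T y, xh k⟫ := by
        rw [hbhk k, inner_smul_right, LinearMap.adjoint_inner_left]
      rw [e1, norm_mul]
      have e2 : ‖((w.p k : ℝ) : ℂ)‖ = w.p k := by
        rw [Complex.norm_real, Real.norm_eq_abs, abs_of_pos (w.pos k)]
      rw [e2]
      have e3 : ‖⟪LinearMap.adjoint T y, xh k⟫‖ ≤ ‖LinearMap.adjoint T y‖ * ‖xh k‖ :=
        norm_inner_le_norm _ _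
      have e4 : w.p k * ‖xh k‖ ≤ C := by
        rw [EuclideanSpace.norm_eq, ← Real.sqrt_sq (w.pos k).le, ← Real.sqrt_mul (by positivity),
          Finset.mul_sum]
        have e5 : ∑ j, (w.p k) ^ 2 * ‖xh k j‖ ^ 2 ≤ ∑ j, ‖x j‖ ^ 2 := by
          apply Finset.sum_le_sum
          intro j _
          have hle := GoodWeight.Ap.le_norm (x j) k
          have h0 : (w.p k) ^ 2 * ‖xh k j‖ ^ 2 = (w.p k * ‖(x j).1 k‖) ^ 2 := by
            rw [mul_pow]
          rw [h0]
          exact pow_le_pow_left₀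
            (mul_nonneg (w.pos k).le (norm_nonneg _)) hle 2
        calc Real.sqrt (∑ j, (w.p k) ^ 2 * ‖xh k j‖ ^ 2) ≤ Real.sqrt (∑ j, ‖x j‖ ^ 2) :=
              Real.sqrt_le_sqrt e5
          _ ≤ C := by rw [hC]; linarith
      calc w.p k * ‖⟪LinearMap.adjoint T y, xh k⟫‖
          ≤ w.p k * (‖LinearMap.adjoint T y‖ * ‖xh k‖) :=
            mul_le_mul_of_nonneg_left e3 (w.pos k).le
        _ = (w.p k * ‖xh k‖) * ‖LinearMap.adjoint T y‖ := by ring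
        _ ≤ C * ‖LinearMap.adjoint T y‖ :=
            mul_le_mul_of_nonneg_right e4 (norm_nonneg _)
    calc (1 / C) * ‖⟪y, bh k⟫‖
        ≤ (1 / C) * (C * ‖LinearMap.adjoint (Matrix.toEuclideanLin (Ah k)) y‖) :=
          mul_le_mul_of_nonneg_left hkey (by positivity)
      _ = ‖LinearMap.adjoint (Matrix.toEuclideanLin (Ah k)) y‖ := by
          field_simp
  · rintro ⟨δ, hδ, h⟩
    have hsol : ∀ k, ∃ v : EuclideanSpace ℂ (Fin n),
        Matrix.toEuclideanLin (Ah k) v = bh k ∧ ‖v‖ ≤ 1 / δ := by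
      intro k
      apply key_exists _ _ δ hδ
      intro y
      have hk := h k y.ofLp
      rwa [hLHS k y.ofLp, hRHS k y.ofLp, WithLp.toLp_ofLp] at hk
    choose v hv1 hv2 using hsol
    have hxel : ∀ j : Fin n, ∃ C : ℝ, ∀ k,
        w.p k * ‖((w.p k : ℂ))⁻¹ * v k j‖ ≤ C := by
      intro j
      refine ⟨1 / δ, fun k => ?_⟩
      have e1 : ‖((w.p k : ℂ))⁻¹ * v k j‖ = (w.p k)⁻¹ * ‖v k j‖ := by
        rw [norm_mul, norm_inv, Complex.norm_real, Real.norm_eq_abs, abs_of_pos (w.pos k)]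
      rw [e1, ← mul_assoc, mul_inv_cancel₀ (w.pos k).ne', one_mul]
      calc ‖v k j‖ = ‖v k j‖ := rfl
        _ ≤ ‖v k‖ := coord_le_norm (v k) j
        _ ≤ 1 / δ := hv2 k
    set x : Fin n → w.Ap := fun j => ⟨fun k => ((w.p k : ℂ))⁻¹ * v k j, hxel j⟩ with hxdef
    refine ⟨x, ?_⟩
    funext i
    apply Subtype.ext
    funext k
    have hpk : ((w.p k : ℝ) : ℂ) ≠ 0 := by exact_mod_cast (w.pos k).ne'
    have h1 : ((A.mulVec x) i).1 k
        = ∑ j, (w.p k : ℂ) * (A i j).1 k * (((w.p k : ℂ))⁻¹ * v k j) :=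
      map_sum (coeffHom w k) _ _
    have h2 : ∀ j : Fin n, (w.p k : ℂ) * (A i j).1 k * (((w.p k : ℂ))⁻¹ * v k j)
        = (A i j).1 k * v k j := by
      intro j
      field_simp
    show ((A.mulVec x) i).1 k = (b i).1 k
    rw [h1, Finset.sum_congr rfl fun j _ => h2 j]
    have h3 := congrFun (congrArg WithLp.ofLp (hv1 k)) i
    exact h3
end

section
/- The Krull dimension of A(p) is infinite: for every N ∈ ℕ there exists a chain P_{N+1} ⊊ P_N ⊊ ⋯ ⊊ P₁ of N+1 distinct prime ideals of the ring A(p). -/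
open scoped BigOperators

namespace KrullAux

open GoodWeight Filter

variable {w : GoodWeight}

/-- Coordinate formula for the Hadamard product. -/
theorem coordMul (a b : w.Ap) (n : ℕ) :
    w.p n * norm ((a * b).1 n)
      = (w.p n * norm (a.1 n)) * (w.p n * norm (b.1 n)) := by
  show w.p n * norm ((w.p n : ℂ) * a.1 n * b.1 n) = _
  rw [norm_mul, norm_mul, Complex.norm_real, Real.norm_eq_abs, abs_of_pos (w.pos n)]; ring

theorem coordAdd (a b : w.Ap) (n : ℕ) : (a + b).1 n = a.1 n + b.1 n := rfl

theorem one_le_E (k n : ℕ) : (1 : ℝ) ≤ ((n : ℝ) + 1) ^ k :=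
  one_le_pow₀ (by have := Nat.cast_nonneg (α := ℝ) n; linarith)

theorem two_le_expE (k n : ℕ) : (2 : ℝ) ≤ Real.exp (((n : ℝ) + 1) ^ k) := by
  have h1 : (2 : ℝ) ≤ Real.exp 1 := by
    have := Real.add_one_le_exp (1 : ℝ); linarith
  exact le_trans h1 (Real.exp_le_exp.mpr (one_le_E k n))

/-- The chain of prime ideals, indexed by `k`. -/
noncomputable def Q (w : GoodWeight) (k : ℕ) : Ideal w.Ap where
  carrier := {a | ∀ m : ℕ,
    {n : ℕ | w.p n * norm (a.1 n) ≤ Real.exp (-(m : ℝ) * ((n : ℝ) + 1) ^ (2 * k))}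
      ∈ Filter.hyperfilter ℕ}
  zero_mem' := by
    intro m
    have : ∀ n : ℕ, n ∈ {n : ℕ | w.p n * norm ((0 : w.Ap).1 n)
        ≤ Real.exp (-(m : ℝ) * ((n : ℝ) + 1) ^ (2 * k))} := by
      intro n
      show w.p n * norm (0 : ℂ) ≤ _
      simp [(Real.exp_pos _).le]
    exact Filter.univ_mem' this
  add_mem' := by
    intro a b ha hb m
    filter_upwards [ha (m + 1), hb (m + 1)] with n hna hnb
    have hE := one_le_E (2 * k) n
    set E : ℝ := ((n : ℝ) + 1) ^ (2 * k)
    have habs : norm (a.1 n + b.1 n) ≤ norm (a.1 n) + norm (b.1 n) :=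
      norm_add_le _ _
    have h1 : w.p n * norm ((a + b).1 n)
        ≤ w.p n * norm (a.1 n) + w.p n * norm (b.1 n) := by
      rw [coordAdd, ← mul_add]
      exact mul_le_mul_of_nonneg_left habs (w.pos n).le
    have h2 : w.p n * norm ((a + b).1 n) ≤ 2 * Real.exp (-((m : ℝ) + 1) * E) := by
      have := add_le_add hna hnb
      push_cast at this ⊢
      linarith
    have h3 : 2 * Real.exp (-((m : ℝ) + 1) * E) ≤ Real.exp (-(m : ℝ) * E) := by
      have he : Real.exp (-((m : ℝ) + 1) * E) * Real.exp E = Real.exp (-(m : ℝ) * E) := by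
        rw [← Real.exp_add]; ring_nf
      calc 2 * Real.exp (-((m : ℝ) + 1) * E)
          ≤ Real.exp E * Real.exp (-((m : ℝ) + 1) * E) :=
            mul_le_mul_of_nonneg_right (two_le_expE (2 * k) n) (Real.exp_pos _).le
        _ = Real.exp (-(m : ℝ) * E) := by rw [mul_comm]; exact he
    exact le_trans h2 h3
  smul_mem' := by
    intro c a ha
    intro m
    obtain ⟨C, hC⟩ := c.2
    obtain ⟨M, hM⟩ := exists_nat_ge C
    filter_upwards [ha (m + M)] with n hn
    have hE := one_le_E (2 * k) n
    set E : ℝ := ((n : ℝ) + 1) ^ (2 * k) with hEdef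
    have key : w.p n * norm ((c * a).1 n)
        = (w.p n * norm (c.1 n)) * (w.p n * norm (a.1 n)) := coordMul c a n
    have hc0 : 0 ≤ w.p n * norm (c.1 n) :=
      mul_nonneg (w.pos n).le (norm_nonneg _)
    have ha0 : 0 ≤ w.p n * norm (a.1 n) :=
      mul_nonneg (w.pos n).le (norm_nonneg _)
    have hCM : w.p n * norm (c.1 n) ≤ Real.exp ((M : ℝ) * E) := by
      have h1 : w.p n * norm (c.1 n) ≤ (M : ℝ) := le_trans (hC n) hM
      have h2 : (M : ℝ) ≤ Real.exp (M : ℝ) :=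
        le_trans (by linarith) (Real.add_one_le_exp (M : ℝ))
      have h3 : Real.exp (M : ℝ) ≤ Real.exp ((M : ℝ) * E) := by
        apply Real.exp_le_exp.mpr
        nlinarith [Nat.cast_nonneg (α := ℝ) M]
      linarith
    have : w.p n * norm ((c • a).1 n)
        ≤ Real.exp ((M : ℝ) * E) * Real.exp (-((m : ℝ) + (M : ℝ)) * E) := by
      have hsm : (c • a : w.Ap) = c * a := rfl
      rw [hsm, key]
      have hn' : w.p n * norm (a.1 n) ≤ Real.exp (-((m : ℝ) + (M : ℝ)) * E) := by
        have := hn; push_cast at this ⊢; convert this using 3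
      exact mul_le_mul hCM hn' ha0 (Real.exp_pos _).le
    calc w.p n * norm ((c • a).1 n)
        ≤ Real.exp ((M : ℝ) * E) * Real.exp (-((m : ℝ) + (M : ℝ)) * E) := this
      _ = Real.exp (-(m : ℝ) * E) := by rw [← Real.exp_add]; ring_nf

theorem Q_isPrime (w : GoodWeight) (k : ℕ) : (Q w k).IsPrime := by
  constructor
  · -- Q ≠ ⊤
    intro htop
    have h1 : (1 : w.Ap) ∈ Q w k := htop ▸ Submodule.mem_top
    have h2 := h1 1
    have hempty : {n : ℕ | w.p n * norm ((1 : w.Ap).1 n)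
        ≤ Real.exp (-(1 : ℕ) * ((n : ℝ) + 1) ^ (2 * k))} = ∅ := by
      ext n
      simp only [Set.mem_setOf_eq, Set.mem_empty_iff_false, iff_false, not_le]
      have hone : w.p n * norm ((1 : w.Ap).1 n) = 1 := by
        show w.p n * norm ((w.p n : ℂ))⁻¹ = 1
        rw [norm_inv, Complex.norm_real, Real.norm_eq_abs, abs_of_pos (w.pos n),
          mul_inv_cancel₀ (w.pos n).ne']
      rw [hone]
      have : -(1 : ℕ) * ((n : ℝ) + 1) ^ (2 * k) < 0 := by
        push_cast
        nlinarith [one_le_E (2 * k) n]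
      calc Real.exp (-(1 : ℕ) * ((n : ℝ) + 1) ^ (2 * k)) < Real.exp 0 :=
            Real.exp_lt_exp.mpr this
        _ = 1 := Real.exp_zero
    rw [hempty] at h2
    exact Filter.empty_notMem _ h2
  · -- primality
    intro a b hab
    by_contra hcon
    push_neg at hcon
    obtain ⟨ha, hb⟩ := hcon
    simp only [Q, Submodule.mem_mk, AddSubmonoid.mem_mk, AddSubsemigroup.mem_mk,
      Set.mem_setOf_eq, not_forall] at ha hb
    obtain ⟨ma, hma⟩ := ha
    obtain ⟨mb, hmb⟩ := hb
    have hTa : {n : ℕ | w.p n * norm (a.1 n)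
        ≤ Real.exp (-(ma : ℝ) * ((n : ℝ) + 1) ^ (2 * k))}ᶜ ∈ Filter.hyperfilter ℕ :=
      Ultrafilter.compl_mem_iff_notMem.mpr hma
    have hTb : {n : ℕ | w.p n * norm (b.1 n)
        ≤ Real.exp (-(mb : ℝ) * ((n : ℝ) + 1) ^ (2 * k))}ᶜ ∈ Filter.hyperfilter ℕ :=
      Ultrafilter.compl_mem_iff_notMem.mpr hmb
    have hab' := hab (ma + mb)
    have hbad : {n : ℕ | w.p n * norm ((a * b).1 n)
        ≤ Real.exp (-((ma + mb : ℕ) : ℝ) * ((n : ℝ) + 1) ^ (2 * k))}ᶜ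
          ∈ Filter.hyperfilter ℕ := by
      filter_upwards [hTa, hTb] with n hna hnb
      simp only [Set.mem_compl_iff, Set.mem_setOf_eq, not_le] at hna hnb ⊢
      rw [coordMul]
      have := mul_lt_mul'' hna hnb (Real.exp_pos _).le (Real.exp_pos _).le
      calc Real.exp (-((ma + mb : ℕ) : ℝ) * ((n : ℝ) + 1) ^ (2 * k))
          = Real.exp (-(ma : ℝ) * ((n : ℝ) + 1) ^ (2 * k))
            * Real.exp (-(mb : ℝ) * ((n : ℝ) + 1) ^ (2 * k)) := by
            rw [← Real.exp_add]; push_cast; ring_nf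
        _ < _ := this
    exact Ultrafilter.compl_mem_iff_notMem.mp hbad hab'

/-- The separating witness: coefficients `exp(-(n+1)^(2k+1)) / p(n)`. -/
noncomputable def wit (w : GoodWeight) (k : ℕ) : w.Ap :=
  ⟨fun n => ((w.p n : ℂ))⁻¹ * (Real.exp (-((n : ℝ) + 1) ^ (2 * k + 1)) : ℝ), by
    refine ⟨1, fun n => ?_⟩
    rw [norm_mul, norm_inv, Complex.norm_real, Complex.norm_real, Real.norm_eq_abs, Real.norm_eq_abs,
      abs_of_pos (w.pos n), abs_of_pos (Real.exp_pos _), ← mul_assoc,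
      mul_inv_cancel₀ (w.pos n).ne', one_mul]
    exact Real.exp_le_one_iff.mpr (neg_nonpos.mpr (by positivity))⟩

theorem wit_coord (w : GoodWeight) (k n : ℕ) :
    w.p n * norm ((wit w k).1 n) = Real.exp (-((n : ℝ) + 1) ^ (2 * k + 1)) := by
  show w.p n * norm (((w.p n : ℂ))⁻¹
      * (Real.exp (-((n : ℝ) + 1) ^ (2 * k + 1)) : ℝ)) = _
  rw [norm_mul, norm_inv, Complex.norm_real, Complex.norm_real, Real.norm_eq_abs, Real.norm_eq_abs,
    abs_of_pos (w.pos n), abs_of_pos (Real.exp_pos _), ← mul_assoc,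
    mul_inv_cancel₀ (w.pos n).ne', one_mul]

theorem wit_mem (w : GoodWeight) (k : ℕ) : wit w k ∈ Q w k := by
  intro m
  apply Filter.mem_hyperfilter_of_finite_compl
  apply Set.Finite.subset (Set.finite_Iio m)
  intro n hn
  simp only [Set.mem_compl_iff, Set.mem_setOf_eq, not_le] at hn
  by_contra hge
  simp only [Set.mem_Iio, not_lt] at hge
  apply absurd hn
  push_neg
  rw [wit_coord]
  apply Real.exp_le_exp.mpr
  have h1 : (m : ℝ) ≤ (n : ℝ) + 1 := by
    have : (m : ℝ) ≤ (n : ℝ) := Nat.cast_le.mpr hge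
    linarith
  have h2 : (0 : ℝ) ≤ ((n : ℝ) + 1) ^ (2 * k) := by positivity
  have h3 : ((n : ℝ) + 1) ^ (2 * k + 1) = ((n : ℝ) + 1) * ((n : ℝ) + 1) ^ (2 * k) := by
    ring
  nlinarith

theorem wit_not_mem (w : GoodWeight) {k l : ℕ} (hkl : k < l) : wit w k ∉ Q w l := by
  intro hmem
  have h2 := hmem 2
  have hempty : {n : ℕ | w.p n * norm ((wit w k).1 n)
      ≤ Real.exp (-(2 : ℕ) * ((n : ℝ) + 1) ^ (2 * l))} = ∅ := by
    ext n
    simp only [Set.mem_setOf_eq, Set.mem_empty_iff_false, iff_false, not_le]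
    rw [wit_coord]
    apply Real.exp_lt_exp.mpr
    have hle : ((n : ℝ) + 1) ^ (2 * k + 1) ≤ ((n : ℝ) + 1) ^ (2 * l) := by
      apply pow_le_pow_right₀ (by have := Nat.cast_nonneg (α := ℝ) n; linarith)
      omega
    have hpos : (0 : ℝ) < ((n : ℝ) + 1) ^ (2 * l) := by positivity
    push_cast
    nlinarith
  rw [hempty] at h2
  exact Filter.empty_notMem _ h2

theorem Q_antitone (w : GoodWeight) {k l : ℕ} (hkl : k ≤ l) : Q w l ≤ Q w k := by
  intro a ha m
  filter_upwards [ha m] with n hn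
  refine le_trans hn (Real.exp_le_exp.mpr ?_)
  have hle : ((n : ℝ) + 1) ^ (2 * k) ≤ ((n : ℝ) + 1) ^ (2 * l) := by
    apply pow_le_pow_right₀ (by have := Nat.cast_nonneg (α := ℝ) n; linarith)
    omega
  nlinarith [Nat.cast_nonneg (α := ℝ) m]

theorem Q_strictAnti (w : GoodWeight) {k l : ℕ} (hkl : k < l) : Q w l < Q w k :=
  lt_of_le_of_ne (Q_antitone w hkl.le)
    (fun h => wit_not_mem w hkl (h ▸ wit_mem w k))

end KrullAux

/-- The Krull dimension of `A(p)` is infinite: for every `N` there is a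
strictly increasing chain of `N + 1` distinct prime ideals of `A(p)`. -/
theorem krullDimensionInfinite (w : GoodWeight) (hg : w.Grows) (N : ℕ) :
    ∃ P : Fin (N + 1) → Ideal w.Ap, StrictMono P ∧ ∀ i, (P i).IsPrime := by
  refine ⟨fun i => KrullAux.Q w (N - i.val), ?_, fun i => KrullAux.Q_isPrime w _⟩
  intro i j hij
  have h1 : j.val ≤ N := Nat.lt_succ_iff.mp j.isLt
  have h2 : i.val < j.val := hij
  exact KrullAux.Q_strictAnti w (by omega)
end
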